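/- Let n > 1 and let D_n be the subalgebra of Ł_{n,1} × Ł_{n,n−1} generated by the pair ((1,0),(1,1)). Then Ł_{n,1} is embeddable into D_n. -/

import Mathlib

/-- The interval `[0, u]` in a totally ordered abelian group: the universe of
the Wajsberg hoop `Γ(G, u)`. -/
def Gam {G : Type*} [AddCommGroup G] [LinearOrder G] [IsOrderedAddMonoid G] (u : G) : Type _ :=
  {x : G // 0 ≤ x ∧ x ≤ u}

/-- Product `a·b = max(a+b-u, 0)` of `Γ(G,u)`. -/
def hmul {G : Type*} [AddCommGroup G] [LinearOrder G] [IsOrderedAddMonoid G] {u : G} (a b : Gam u) : Gam u :=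
  ⟨max (a.1 + b.1 - u) 0, le_max_right _ _,
    max_le (sub_le_iff_le_add.mpr (add_le_add a.2.2 b.2.2)) (a.2.1.trans a.2.2)⟩

/-- Residuum `a→b = min(u-a+b, u)` of `Γ(G,u)`. -/
def himp {G : Type*} [AddCommGroup G] [LinearOrder G] [IsOrderedAddMonoid G] {u : G} (a b : Gam u) : Gam u :=
  ⟨min (u - a.1 + b.1) u,
    le_min (add_nonneg (sub_nonneg.mpr a.2.2) b.2.1) (a.2.1.trans a.2.2),
    min_le_right _ _⟩

/-- Top element (monoid unit) of `Γ(G,u)`. -/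
def hone {G : Type*} [AddCommGroup G] [LinearOrder G] [IsOrderedAddMonoid G] (u : G) (hu : 0 ≤ u) : Gam u :=
  ⟨u, hu, le_rfl⟩

/-- An embedding of hoops: an injective map preserving `·`, `→` and `1`. -/
structure IsHoopEmbedding {A B : Type*} (mA : A → A → A) (iA : A → A → A) (oA : A)
    (mB : B → B → B) (iB : B → B → B) (oB : B) (f : A → B) : Prop where
  inj : Function.Injective f
  map_mul : ∀ x y, f (mA x y) = mB (f x) (f y)
  map_imp : ∀ x y, f (iA x y) = iB (f x) (f y)
  map_one : f oA = oB

/-- Membership in the subalgebra generated by `a`. -/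
inductive HGen {A : Type*} (m : A → A → A) (i : A → A → A) (o : A) (a : A) : A → Prop
  | base : HGen m i o a a
  | one : HGen m i o a o
  | mul {x y} : HGen m i o a x → HGen m i o a y → HGen m i o a (m x y)
  | imp {x y} : HGen m i o a x → HGen m i o a y → HGen m i o a (i x y)

theorem lex_le (a b c d : ℤ) (h : a < c ∨ (a = c ∧ b ≤ d)) :
    (toLex (a, b) : ℤ ×ₗ ℤ) ≤ toLex (c, d) :=
  Prod.Lex.le_iff.mpr h

-- ### Auxiliary development ###

section GamHelpers

variable {U1 U2 : ℤ}

private lemma gmul_val {x y : Gam (toLex (U1,U2) : ℤ ×ₗ ℤ)} {p q p' q' : ℤ}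
    (hx : x.1 = toLex (p,q)) (hy : y.1 = toLex (p',q')) :
    (hmul x y).1 = max (toLex (p+p'-U1, q+q'-U2)) 0 := by
  show max (x.1 + y.1 - toLex (U1,U2)) 0 = _
  rw [hx, hy]; rfl

private lemma gmul_pos {x y : Gam (toLex (U1,U2) : ℤ ×ₗ ℤ)} {p q p' q' P Q : ℤ}
    (hx : x.1 = toLex (p,q)) (hy : y.1 = toLex (p',q'))
    (h1 : p+p'-U1 = P) (h2 : q+q'-U2 = Q) (h3 : 0 < P ∨ (0 = P ∧ 0 ≤ Q)) :
    (hmul x y).1 = toLex (P,Q) := by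
  rw [gmul_val hx hy, h1, h2]; exact max_eq_left (lex_le 0 0 P Q h3)

private lemma gmul_zero_le {x y : Gam (toLex (U1,U2) : ℤ ×ₗ ℤ)} {c d p' q' : ℤ}
    (hx : x.1 ≤ toLex (c,d)) (hy : y.1 = toLex (p',q'))
    (h3 : c+p'-U1 < 0 ∨ (c+p'-U1 = 0 ∧ d+q'-U2 ≤ 0)) :
    (hmul x y).1 = toLex (0,0) := by
  have h : x.1 + y.1 - toLex (U1,U2) ≤ toLex (c+p'-U1, d+q'-U2) := by
    rw [hy]
    calc x.1 + toLex (p',q') - toLex (U1,U2)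
        ≤ toLex (c,d) + toLex (p',q') - toLex (U1,U2) :=
          sub_le_sub_right (add_le_add hx le_rfl) _
      _ = _ := rfl
  exact max_eq_right (h.trans (lex_le _ _ 0 0 h3))

private lemma gmul_le {x y : Gam (toLex (U1,U2) : ℤ ×ₗ ℤ)} {p q p' q' : ℤ}
    (hx : x.1 = toLex (p,q)) (hy : y.1 = toLex (p',q')) (C D : ℤ)
    (h1 : p+p'-U1 < C ∨ (p+p'-U1 = C ∧ q+q'-U2 ≤ D))
    (h2 : 0 < C ∨ (0 = C ∧ 0 ≤ D)) :
    (hmul x y).1 ≤ toLex (C,D) := by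
  rw [gmul_val hx hy]
  exact max_le (lex_le _ _ _ _ h1) (lex_le 0 0 _ _ h2)

private lemma gimp_val {x y : Gam (toLex (U1,U2) : ℤ ×ₗ ℤ)} {p q p' q' : ℤ}
    (hx : x.1 = toLex (p,q)) (hy : y.1 = toLex (p',q')) :
    (himp x y).1 = min (toLex (U1-p+p', U2-q+q')) (toLex (U1,U2)) := by
  show min (toLex (U1,U2) - x.1 + y.1) _ = _
  rw [hx, hy]; rfl

private lemma gimp_lt {x y : Gam (toLex (U1,U2) : ℤ ×ₗ ℤ)} {p q p' q' P Q : ℤ}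
    (hx : x.1 = toLex (p,q)) (hy : y.1 = toLex (p',q'))
    (h1 : U1-p+p' = P) (h2 : U2-q+q' = Q) (h3 : P < U1 ∨ (P = U1 ∧ Q ≤ U2)) :
    (himp x y).1 = toLex (P,Q) := by
  rw [gimp_val hx hy, h1, h2]; exact min_eq_left (lex_le _ _ _ _ h3)

private lemma gimp_top {x y : Gam (toLex (U1,U2) : ℤ ×ₗ ℤ)} {p q p' q' : ℤ}
    (hx : x.1 = toLex (p,q)) (hy : y.1 = toLex (p',q'))
    (h3 : U1 < U1-p+p' ∨ (U1 = U1-p+p' ∧ U2 ≤ U2-q+q')) :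
    (himp x y).1 = toLex (U1,U2) := by
  rw [gimp_val hx hy]; exact min_eq_right (lex_le _ _ _ _ h3)

end GamHelpers

section Dn

variable (n : ℕ)

/-- `Ł_{n,1} = Γ(ℤ ×ₗ ℤ, (n,1))`. -/
abbrev Ln1 := Gam (toLex ((n : ℤ), (1 : ℤ)))

/-- `Ł_{n,n-1} = Γ(ℤ ×ₗ ℤ, (n,n-1))`. -/
abbrev LnPred := Gam (toLex ((n : ℤ), (n : ℤ) - 1))

/-- Componentwise product on `Ł_{n,1} × Ł_{n,n−1}`. -/
def pmul (x y : Ln1 n × LnPred n) : Ln1 n × LnPred n :=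
  (hmul x.1 y.1, hmul x.2 y.2)

/-- Componentwise residuum on `Ł_{n,1} × Ł_{n,n−1}`. -/
def pimp (x y : Ln1 n × LnPred n) : Ln1 n × LnPred n :=
  (himp x.1 y.1, himp x.2 y.2)

variable (hn : 1 < n)

/-- Unit of `Ł_{n,1} × Ł_{n,n−1}`. -/
def pone : Ln1 n × LnPred n :=
  (hone _ (lex_le 0 0 _ _ (Or.inl (by exact_mod_cast Nat.zero_lt_of_lt hn))),
   hone _ (lex_le 0 0 _ _ (Or.inl (by exact_mod_cast Nat.zero_lt_of_lt hn))))

/-- The generator `((1,0),(1,1))` of `D_n`. -/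
def genD : Ln1 n × LnPred n :=
  (⟨toLex ((1 : ℤ), (0 : ℤ)),
      lex_le 0 0 1 0 (Or.inl one_pos), lex_le 1 0 _ _ (Or.inl (by exact_mod_cast hn))⟩,
   ⟨toLex ((1 : ℤ), (1 : ℤ)),
      lex_le 0 0 1 1 (Or.inl one_pos), lex_le 1 1 _ _ (Or.inl (by exact_mod_cast hn))⟩)

/-- `D_n`: the subalgebra of `Ł_{n,1} × Ł_{n,n−1}` generated by `((1,0),(1,1))`. -/
def Dn : Type :=
  {x : Ln1 n × LnPred n // HGen (pmul n) (pimp n) (pone n hn) (genD n hn) x}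

/-- Product of `D_n`. -/
def dmul (a b : Dn n hn) : Dn n hn := ⟨pmul n a.1 b.1, HGen.mul a.2 b.2⟩

/-- Residuum of `D_n`. -/
def dimp (a b : Dn n hn) : Dn n hn := ⟨pimp n a.1 b.1, HGen.imp a.2 b.2⟩

/-- Unit of `D_n`. -/
def done : Dn n hn := ⟨pone n hn, HGen.one⟩

-- ## Main auxiliary development


private lemma toLex_congr {a b c d : ℤ} (h1 : a = c) (h2 : b = d) :
    (toLex (a,b) : ℤ ×ₗ ℤ) = toLex (c,d) := by rw [h1, h2]

/-- The unit of `Ł_{n,1}`. -/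
private def one1 : Ln1 n := (pone n hn).1

/-- The generator `(1,0)` of `Ł_{n,1}`. -/
private def a1 : Ln1 n := (genD n hn).1

private lemma hNgt (h : 1 < n) : (1:ℤ) < (n:ℤ) := by exact_mod_cast h

private lemma ha1 : (a1 n hn).1 = toLex ((1:ℤ),(0:ℤ)) := rfl

/-- `Ł_{n,1}` elements `(n-j, 1)` are generated by `(1,0)`. -/
private lemma gen_x : ∀ j : ℕ, j ≤ n → ∀ y : Ln1 n,
    y.1 = toLex ((n:ℤ) - (j:ℤ), 1) →
    HGen hmul himp (one1 n hn) (a1 n hn) y := by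
  have hN := hNgt n hn
  intro j
  induction j with
  | zero =>
    intro _ y hy
    have h : one1 n hn = y := Subtype.ext (by
      rw [hy]; exact toLex_congr (by omega) rfl)
    exact h ▸ HGen.one
  | succ j ih =>
    intro hj y hy
    set xj : Ln1 n := ⟨toLex ((n:ℤ) - (j:ℤ), 1),
      lex_le _ _ _ _ (by omega), lex_le _ _ _ _ (by omega)⟩ with hxj
    have hgxj : HGen hmul himp (one1 n hn) (a1 n hn) xj :=
      ih (by omega) xj rfl
    have hbot : (hmul (a1 n hn) (a1 n hn)).1 = toLex ((0:ℤ),(0:ℤ)) :=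
      gmul_zero_le (le_of_eq (ha1 n hn)) (ha1 n hn) (by omega)
    have hnota : (himp (a1 n hn) (hmul (a1 n hn) (a1 n hn))).1
        = toLex ((n:ℤ)-1, (1:ℤ)) :=
      gimp_lt (ha1 n hn) hbot (by ring) (by ring) (by omega)
    have hval : (hmul xj (himp (a1 n hn) (hmul (a1 n hn) (a1 n hn)))).1
        = toLex ((n:ℤ) - ((j:ℤ)+1), 1) :=
      gmul_pos rfl hnota (by ring) (by ring) (by omega)
    have heq : hmul xj (himp (a1 n hn) (hmul (a1 n hn) (a1 n hn))) = y :=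
      Subtype.ext (by rw [hval, hy]; exact toLex_congr (by omega) rfl)
    exact heq ▸ HGen.mul hgxj (HGen.imp HGen.base (HGen.mul HGen.base HGen.base))

/-- `Ł_{n,1}` elements `(n, 1-k)` are generated by `(1,0)`. -/
private lemma gen_y : ∀ k : ℕ, ∀ y : Ln1 n,
    y.1 = toLex ((n:ℤ), 1 - (k:ℤ)) →
    HGen hmul himp (one1 n hn) (a1 n hn) y := by
  have hN := hNgt n hn
  intro k
  induction k with
  | zero =>
    intro y hy
    have h : one1 n hn = y := Subtype.ext (by
      rw [hy]; exact toLex_congr rfl (by omega))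
    exact h ▸ HGen.one
  | succ k ih =>
    intro y hy
    set yk : Ln1 n := ⟨toLex ((n:ℤ), 1 - (k:ℤ)),
      lex_le _ _ _ _ (by omega), lex_le _ _ _ _ (by omega)⟩ with hyk
    have hgyk : HGen hmul himp (one1 n hn) (a1 n hn) yk := ih yk rfl
    -- the element x₁ = (1,1)
    set x1 : Ln1 n := ⟨toLex ((1:ℤ), (1:ℤ)),
      lex_le _ _ _ _ (by omega), lex_le _ _ _ _ (by omega)⟩ with hx1
    have hgx1 : HGen hmul himp (one1 n hn) (a1 n hn) x1 := by
      refine gen_x n hn (n-1) (by omega) x1 ?_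
      have e : (n:ℤ) - ((n-1 : ℕ):ℤ) = 1 := by omega
      rw [e]
    -- the element d = (n,0)
    have hd : (himp x1 (a1 n hn)).1 = toLex ((n:ℤ), (0:ℤ)) :=
      gimp_lt rfl (ha1 n hn) (by ring) (by ring) (by omega)
    have hgd : HGen hmul himp (one1 n hn) (a1 n hn) (himp x1 (a1 n hn)) :=
      HGen.imp hgx1 HGen.base
    have hval : (hmul yk (himp x1 (a1 n hn))).1 = toLex ((n:ℤ), 1 - ((k:ℤ)+1)) :=
      gmul_pos rfl hd (by ring) (by ring) (by omega)
    have heq : hmul yk (himp x1 (a1 n hn)) = y :=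
      Subtype.ext (by rw [hval, hy]; exact toLex_congr rfl (by omega))
    exact heq ▸ HGen.mul hgyk hgd

/-- Every element of `Ł_{n,1}` is generated by `(1,0)`. -/
private lemma gen_all (x : Ln1 n) :
    HGen hmul himp (one1 n hn) (a1 n hn) x := by
  have hN := hNgt n hn
  obtain ⟨v, h0, hu⟩ := x
  set P : ℤ := (ofLex v).1 with hP
  set Q : ℤ := (ofLex v).2 with hQdef
  have hv : v = toLex (P, Q) := rfl
  have h0' : 0 < P ∨ (0 = P ∧ 0 ≤ Q) := Prod.Lex.le_iff.mp h0
  have hu' : P < (n:ℤ) ∨ (P = (n:ℤ) ∧ Q ≤ 1) := Prod.Lex.le_iff.mp hu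
  by_cases hQ : Q ≤ 1
  · -- x = xP · yQ
    set xP : Ln1 n := ⟨toLex (P, (1:ℤ)),
      lex_le _ _ _ _ (by omega), lex_le _ _ _ _ (by omega)⟩ with hxP
    have hgxP : HGen hmul himp (one1 n hn) (a1 n hn) xP := by
      refine gen_x n hn ((n:ℤ) - P).toNat (by omega) xP ?_
      have e : (n:ℤ) - ((((n:ℤ) - P).toNat : ℕ):ℤ) = P := by omega
      rw [e]
    set yQ : Ln1 n := ⟨toLex ((n:ℤ), Q),
      lex_le _ _ _ _ (by omega), lex_le _ _ _ _ (by omega)⟩ with hyQ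
    have hgyQ : HGen hmul himp (one1 n hn) (a1 n hn) yQ := by
      refine gen_y n hn ((1:ℤ) - Q).toNat yQ ?_
      have e : 1 - ((((1:ℤ) - Q).toNat : ℕ):ℤ) = Q := by omega
      rw [e]
    have hval : (hmul xP yQ).1 = toLex (P, Q) :=
      gmul_pos rfl rfl (by ring) (by ring) h0'
    have heq : hmul xP yQ = (⟨v, h0, hu⟩ : Ln1 n) :=
      Subtype.ext (by rw [hval]; exact hv.symm)
    exact heq ▸ HGen.mul hgxP hgyQ
  · -- Q ≥ 2, so P < n ; x = yQ' → xP
    have hPn : P < (n:ℤ) := by omega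
    set xP : Ln1 n := ⟨toLex (P, (1:ℤ)),
      lex_le _ _ _ _ (by omega), lex_le _ _ _ _ (by omega)⟩ with hxP
    have hgxP : HGen hmul himp (one1 n hn) (a1 n hn) xP := by
      refine gen_x n hn ((n:ℤ) - P).toNat (by omega) xP ?_
      have e : (n:ℤ) - ((((n:ℤ) - P).toNat : ℕ):ℤ) = P := by omega
      rw [e]
    set yQ : Ln1 n := ⟨toLex ((n:ℤ), 2 - Q),
      lex_le _ _ _ _ (by omega), lex_le _ _ _ _ (by omega)⟩ with hyQ
    have hgyQ : HGen hmul himp (one1 n hn) (a1 n hn) yQ := by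
      refine gen_y n hn (Q - 1).toNat yQ ?_
      have e : 1 - (((Q - 1).toNat : ℕ):ℤ) = 2 - Q := by omega
      rw [e]
    have hval : (himp yQ xP).1 = toLex (P, Q) :=
      gimp_lt rfl rfl (by ring) (by ring) (Or.inl hPn)
    have heq : himp yQ xP = (⟨v, h0, hu⟩ : Ln1 n) :=
      Subtype.ext (by rw [hval]; exact hv.symm)
    exact heq ▸ HGen.imp hgyQ hgxP

-- ## The homomorphism ψ : Ł_{n,1} → Ł_{n,n-1}, (P,Q) ↦ (P,(n-1)Q)

private def psiv (v : ℤ ×ₗ ℤ) : ℤ ×ₗ ℤ := toLex ((ofLex v).1, ((n:ℤ)-1) * (ofLex v).2)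

private lemma psiv_toLex (a b : ℤ) : psiv n (toLex (a,b)) = toLex (a, ((n:ℤ)-1) * b) := rfl

private lemma psiv_mono (h : 1 < n) : Monotone (psiv n) := by
  intro a b hab
  rcases Prod.Lex.le_iff.mp hab with h1 | ⟨h1, h2⟩
  · exact lex_le _ _ _ _ (Or.inl h1)
  · refine lex_le _ _ _ _ (Or.inr ⟨h1, ?_⟩)
    have hN : (1:ℤ) < (n:ℤ) := by exact_mod_cast h
    exact mul_le_mul_of_nonneg_left h2 (by omega)

private lemma psiv_add (x y : ℤ ×ₗ ℤ) : psiv n (x + y) = psiv n x + psiv n y := by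
  show toLex ((ofLex x).1 + (ofLex y).1, ((n:ℤ)-1) * ((ofLex x).2 + (ofLex y).2)) = _
  rw [mul_add]; rfl

private lemma psiv_sub (x y : ℤ ×ₗ ℤ) : psiv n (x - y) = psiv n x - psiv n y := by
  show toLex ((ofLex x).1 - (ofLex y).1, ((n:ℤ)-1) * ((ofLex x).2 - (ofLex y).2)) = _
  rw [mul_sub]; rfl

private lemma psiv_zero : psiv n 0 = 0 := by
  show toLex ((0:ℤ), ((n:ℤ)-1) * 0) = _
  rw [mul_zero]; rfl

private lemma psiv_u1 : psiv n (toLex ((n:ℤ), (1:ℤ))) = toLex ((n:ℤ), (n:ℤ)-1) := by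
  rw [psiv_toLex, mul_one]

private def psi (x : Ln1 n) : LnPred n :=
  ⟨psiv n x.1, by
    constructor
    · have h0 := psiv_mono n hn x.2.1
      rwa [psiv_zero] at h0
    · have h1 := psiv_mono n hn x.2.2
      rwa [psiv_u1] at h1⟩

private lemma psi_mul (x y : Ln1 n) :
    psi n hn (hmul x y) = hmul (psi n hn x) (psi n hn y) := by
  apply Subtype.ext
  show psiv n (max (x.1 + y.1 - toLex ((n:ℤ),(1:ℤ))) 0)
      = max (psiv n x.1 + psiv n y.1 - toLex ((n:ℤ),(n:ℤ)-1)) 0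
  rw [(psiv_mono n hn).map_max, psiv_zero, psiv_sub, psiv_add, psiv_u1]

private lemma psi_imp (x y : Ln1 n) :
    psi n hn (himp x y) = himp (psi n hn x) (psi n hn y) := by
  apply Subtype.ext
  show psiv n (min (toLex ((n:ℤ),(1:ℤ)) - x.1 + y.1) (toLex ((n:ℤ),(1:ℤ))))
      = min (toLex ((n:ℤ),(n:ℤ)-1) - psiv n x.1 + psiv n y.1) (toLex ((n:ℤ),(n:ℤ)-1))
  rw [(psiv_mono n hn).map_min, psiv_add, psiv_sub, psiv_u1]

-- ## The embedding f₀ = (id, ψ)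

private def f0 (x : Ln1 n) : Ln1 n × LnPred n := (x, psi n hn x)

private lemma f0_mul (x y : Ln1 n) : f0 n hn (hmul x y) = pmul n (f0 n hn x) (f0 n hn y) := by
  show (hmul x y, psi n hn (hmul x y)) = (hmul x y, hmul (psi n hn x) (psi n hn y))
  rw [psi_mul]

private lemma f0_imp (x y : Ln1 n) : f0 n hn (himp x y) = pimp n (f0 n hn x) (f0 n hn y) := by
  show (himp x y, psi n hn (himp x y)) = (himp x y, himp (psi n hn x) (psi n hn y))
  rw [psi_imp]

private lemma f0_one : f0 n hn (one1 n hn) = pone n hn := by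
  show ((pone n hn).1, psi n hn (one1 n hn)) = ((pone n hn).1, (pone n hn).2)
  congr 1
  exact Subtype.ext (psiv_u1 n)

-- ## `f₀ (1,0) = ((1,0),(1,0))` lies in `D_n`

private lemma mem_a1 :
    HGen (pmul n) (pimp n) (pone n hn) (genD n hn) (f0 n hn (a1 n hn)) := by
  have hN := hNgt n hn
  set g : Ln1 n × LnPred n := genD n hn with hg
  have hg1 : g.1.1 = toLex ((1:ℤ),(0:ℤ)) := rfl
  have hg2 : g.2.1 = toLex ((1:ℤ),(1:ℤ)) := rfl
  -- bottom = g·g·g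
  set bot : Ln1 n × LnPred n := pmul n (pmul n g g) g with hbot
  have hb1' : (hmul g.1 g.1).1 ≤ toLex ((0:ℤ),(1:ℤ)) :=
    gmul_le hg1 hg1 0 1 (by omega) (by omega)
  have hb2' : (hmul g.2 g.2).1 ≤ toLex ((0:ℤ),(1:ℤ)) :=
    gmul_le hg2 hg2 0 1 (by omega) (by omega)
  have hbot1 : bot.1.1 = toLex ((0:ℤ),(0:ℤ)) := gmul_zero_le hb1' hg1 (by omega)
  have hbot2 : bot.2.1 = toLex ((0:ℤ),(0:ℤ)) := gmul_zero_le hb2' hg2 (by omega)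
  -- ¬g = g → bot
  set ng : Ln1 n × LnPred n := pimp n g bot with hng
  have hng1 : ng.1.1 = toLex ((n:ℤ)-1, (1:ℤ)) :=
    gimp_lt hg1 hbot1 (by ring) (by ring) (by omega)
  have hng2 : ng.2.1 = toLex ((n:ℤ)-1, (n:ℤ)-2) :=
    gimp_lt hg2 hbot2 (by ring) (by ring) (by omega)
  have hngG : HGen (pmul n) (pimp n) (pone n hn) (genD n hn) ng :=
    HGen.imp HGen.base (HGen.mul (HGen.mul HGen.base HGen.base) HGen.base)
  -- powers of ¬g : z_j = ((n-j,1),(n-j,n-1-j))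
  have genz : ∀ j : ℕ, j ≤ n - 1 → ∀ w : Ln1 n × LnPred n,
      w.1.1 = toLex ((n:ℤ) - (j:ℤ), 1) → w.2.1 = toLex ((n:ℤ) - (j:ℤ), (n:ℤ)-1-(j:ℤ)) →
      HGen (pmul n) (pimp n) (pone n hn) (genD n hn) w := by
    intro j
    induction j with
    | zero =>
      intro _ w hw1 hw2
      have h : pone n hn = w := by
        refine Prod.ext (Subtype.ext ?_) (Subtype.ext ?_)
        · rw [hw1]; exact toLex_congr (by omega) rfl
        · rw [hw2]; exact toLex_congr (by omega) (by omega)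
      exact h ▸ HGen.one
    | succ j ih =>
      intro hj w hw1 hw2
      set zj : Ln1 n × LnPred n :=
        (⟨toLex ((n:ℤ) - (j:ℤ), 1), lex_le _ _ _ _ (by omega), lex_le _ _ _ _ (by omega)⟩,
         ⟨toLex ((n:ℤ) - (j:ℤ), (n:ℤ)-1-(j:ℤ)), lex_le _ _ _ _ (by omega),
           lex_le _ _ _ _ (by omega)⟩) with hzj
      have hgz : HGen (pmul n) (pimp n) (pone n hn) (genD n hn) zj :=
        ih (by omega) zj rfl rfl
      have hv1 : (pmul n zj ng).1.1 = toLex ((n:ℤ) - ((j:ℤ)+1), 1) :=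
        gmul_pos rfl hng1 (by ring) (by ring) (by omega)
      have hv2 : (pmul n zj ng).2.1 = toLex ((n:ℤ) - ((j:ℤ)+1), (n:ℤ)-1-((j:ℤ)+1)) :=
        gmul_pos rfl hng2 (by ring) (by ring) (by omega)
      have h : pmul n zj ng = w := by
        refine Prod.ext (Subtype.ext ?_) (Subtype.ext ?_)
        · rw [hv1, hw1]; exact toLex_congr (by omega) rfl
        · rw [hv2, hw2]; exact toLex_congr (by omega) (by omega)
      exact h ▸ HGen.mul hgz hngG
  -- z_{n-1} = ((1,1),(1,0))
  set zf : Ln1 n × LnPred n :=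
    (⟨toLex ((1:ℤ),(1:ℤ)), lex_le _ _ _ _ (by omega), lex_le _ _ _ _ (by omega)⟩,
     ⟨toLex ((1:ℤ),(0:ℤ)), lex_le _ _ _ _ (by omega), lex_le _ _ _ _ (by omega)⟩) with hzf
  have hgzf : HGen (pmul n) (pimp n) (pone n hn) (genD n hn) zf := by
    refine genz (n-1) le_rfl zf ?_ ?_
    · exact (toLex_congr (by omega) rfl).symm
    · exact (toLex_congr (by omega) (by omega)).symm
  -- t = g → z_{n-1} = ((n,1),(n,n-2))
  set t : Ln1 n × LnPred n := pimp n g zf with ht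
  have ht1 : t.1.1 = toLex ((n:ℤ), (1:ℤ)) := gimp_top hg1 rfl (by omega)
  have ht2 : t.2.1 = toLex ((n:ℤ), (n:ℤ)-2) :=
    gimp_lt hg2 rfl (by ring) (by ring) (by omega)
  have hgt : HGen (pmul n) (pimp n) (pone n hn) (genD n hn) t :=
    HGen.imp HGen.base hgzf
  -- A = g · t = ((1,0),(1,0))
  have hA1 : (pmul n g t).1.1 = toLex ((1:ℤ),(0:ℤ)) :=
    gmul_pos hg1 ht1 (by ring) (by ring) (by omega)
  have hA2 : (pmul n g t).2.1 = toLex ((1:ℤ),(0:ℤ)) :=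
    gmul_pos hg2 ht2 (by ring) (by ring) (by omega)
  have h : pmul n g t = f0 n hn (a1 n hn) := by
    refine Prod.ext (Subtype.ext ?_) (Subtype.ext ?_)
    · rw [hA1]; rfl
    · rw [hA2]
      show _ = psiv n (toLex ((1:ℤ),(0:ℤ)))
      rw [psiv_toLex, mul_zero]
  exact h ▸ HGen.mul HGen.base hgt

private lemma mem_all (x : Ln1 n) :
    HGen (pmul n) (pimp n) (pone n hn) (genD n hn) (f0 n hn x) := by
  induction gen_all n hn x with
  | base => exact mem_a1 n hn
  | one => rw [f0_one]; exact HGen.one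
  | mul hx hy ihx ihy => rw [f0_mul]; exact HGen.mul ihx ihy
  | imp hx hy ihx ihy => rw [f0_imp]; exact HGen.imp ihx ihy

/-- Gispert: for `n > 1`, the chain `Ł_{n,1}` is embeddable into
`D_n`, the subalgebra of `Ł_{n,1} × Ł_{n,n−1}` generated by `((1,0),(1,1))`. -/
theorem Ln1_embeds_into_Dn :
    ∃ f : Ln1 n → Dn n hn,
      IsHoopEmbedding hmul himp
        (hone _ (lex_le 0 0 _ _ (Or.inl (by exact_mod_cast Nat.zero_lt_of_lt hn))))
        (dmul n hn) (dimp n hn) (done n hn) f := by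
  refine ⟨fun x => ⟨f0 n hn x, mem_all n hn x⟩, ?_, ?_, ?_, ?_⟩
  · intro x y h
    exact congrArg (fun z => z.1.1) h
  · intro x y
    exact Subtype.ext (f0_mul n hn x y)
  · intro x y
    exact Subtype.ext (f0_imp n hn x y)
  · exact Subtype.ext (f0_one n hn)

end Dn
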